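/- The star product f ⋆ h = ∑_{n≥0} (λ^n/n!) y^n (∂_x^n f)(∂_z^n h) on polynomials in x, y, z is associative. -/

import Mathlib

open MvPolynomial Finset

noncomputable def D (i : Fin 3) : MvPolynomial (Fin 3) ℝ → MvPolynomial (Fin 3) ℝ :=
  fun p => pderiv i p

lemma D_add (i : Fin 3) (p q : MvPolynomial (Fin 3) ℝ) : D i (p + q) = D i p + D i q := by
  simp [D]

lemma D_smul (i : Fin 3) (r : ℝ) (p : MvPolynomial (Fin 3) ℝ) : D i (r • p) = r • D i p := by
  simp [D]

lemma iterD_add (i : Fin 3) (n : ℕ) (p q : MvPolynomial (Fin 3) ℝ) :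
    (D i)^[n] (p + q) = (D i)^[n] p + (D i)^[n] q := by
  induction n generalizing p q with
  | zero => simp
  | succ n ih => simp [Function.iterate_succ_apply, D_add, ih]

lemma iterD_smul (i : Fin 3) (n : ℕ) (r : ℝ) (p : MvPolynomial (Fin 3) ℝ) :
    (D i)^[n] (r • p) = r • (D i)^[n] p := by
  induction n generalizing p with
  | zero => simp
  | succ n ih => simp [Function.iterate_succ_apply, D_smul, ih]

lemma iterD_nsmul (i : Fin 3) (n : ℕ) (k : ℕ) (p : MvPolynomial (Fin 3) ℝ) :
    (D i)^[n] (k • p) = k • (D i)^[n] p := by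
  induction n generalizing p with
  | zero => simp
  | succ n ih =>
    rw [← Nat.cast_smul_eq_nsmul ℝ, iterD_smul, Nat.cast_smul_eq_nsmul]

lemma iterD_zero_poly (i : Fin 3) (n : ℕ) : (D i)^[n] (0 : MvPolynomial (Fin 3) ℝ) = 0 := by
  induction n with
  | zero => simp
  | succ n ih => simp [Function.iterate_succ_apply, D, ih]

lemma iterD_sum {β : Type*} (i : Fin 3) (n : ℕ) (s : Finset β)
    (F : β → MvPolynomial (Fin 3) ℝ) :
    (D i)^[n] (∑ b ∈ s, F b) = ∑ b ∈ s, (D i)^[n] (F b) := by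
  classical
  induction s using Finset.induction_on with
  | empty => simp [iterD_zero_poly]
  | insert _ _ hx ih => simp [Finset.sum_insert hx, iterD_add, ih]

lemma D_comm (i j : Fin 3) (p : MvPolynomial (Fin 3) ℝ) : D i (D j p) = D j (D i p) := by
  induction p using MvPolynomial.induction_on' with
  | monomial s a =>
    simp only [D, pderiv_monomial]
    rcases eq_or_ne i j with rfl | hij
    · rfl
    · have h1 : (s - Finsupp.single j 1 : Fin 3 →₀ ℕ) i = s i := by
        rw [Finsupp.tsub_apply, Finsupp.single_apply, if_neg hij.symm, Nat.sub_zero]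
      have h2 : (s - Finsupp.single i 1 : Fin 3 →₀ ℕ) j = s j := by
        rw [Finsupp.tsub_apply, Finsupp.single_apply, if_neg hij, Nat.sub_zero]
      rw [h1, h2, tsub_right_comm, mul_right_comm]
  | add p q hp hq => simp [D_add, hp, hq]

lemma D_comm_fun (i j : Fin 3) : Function.Commute (D i) (D j) := fun p => D_comm i j p

lemma iterD_comm (i j : Fin 3) (a b : ℕ) (p : MvPolynomial (Fin 3) ℝ) :
    (D i)^[a] ((D j)^[b] p) = (D j)^[b] ((D i)^[a] p) :=
  (D_comm_fun i j).iterate_iterate a b p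

lemma D_Y (i : Fin 3) (hi : i ≠ 1) (n : ℕ) (u : MvPolynomial (Fin 3) ℝ) :
    D i ((X 1 : MvPolynomial (Fin 3) ℝ) ^ n * u) = X 1 ^ n * D i u := by
  have hX : pderiv i (X 1 : MvPolynomial (Fin 3) ℝ) = 0 := pderiv_X_of_ne (Ne.symm hi)
  simp [D, pderiv_mul, pderiv_pow, hX]

lemma iterD_Y (i : Fin 3) (hi : i ≠ 1) (m n : ℕ) (u : MvPolynomial (Fin 3) ℝ) :
    (D i)^[m] ((X 1 : MvPolynomial (Fin 3) ℝ) ^ n * u) = X 1 ^ n * (D i)^[m] u := by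
  induction m generalizing u with
  | zero => simp
  | succ m ih => rw [Function.iterate_succ_apply, D_Y i hi, ih, ← Function.iterate_succ_apply]

lemma iterD_leibniz (i : Fin 3) (n : ℕ) (p q : MvPolynomial (Fin 3) ℝ) :
    (D i)^[n] (p * q) =
      ∑ k ∈ range n.succ, (n.choose k • ((D i)^[n - k] p * (D i)^[k] q)) := by
  induction n with
  | zero => simp [Finset.range]
  | succ n IH =>
    calc
      (D i)^[n + 1] (p * q) =
          D i (∑ k ∈ range n.succ,
              n.choose k • ((D i)^[n - k] p * (D i)^[k] q)) := by
        rw [Function.iterate_succ_apply', IH]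
      _ = (∑ k ∈ range n.succ,
            n.choose k • ((D i)^[n - k + 1] p * (D i)^[k] q)) +
          ∑ k ∈ range n.succ,
            n.choose k • ((D i)^[n - k] p * (D i)^[k + 1] q) := by
        have hD : ∀ u v : MvPolynomial (Fin 3) ℝ,
            D i (u * v) = D i u * v + u * D i v := fun u v => pderiv_mul
        have hDnsmul : ∀ (k : ℕ) (u : MvPolynomial (Fin 3) ℝ),
            D i (k • u) = k • D i u := by
          intro k u
          rw [← Nat.cast_smul_eq_nsmul ℝ, D_smul, Nat.cast_smul_eq_nsmul]
        rw [show (D i (∑ k ∈ range n.succ,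
              n.choose k • ((D i)^[n - k] p * (D i)^[k] q))) =
            ∑ k ∈ range n.succ,
              D i (n.choose k • ((D i)^[n - k] p * (D i)^[k] q)) from map_sum _ _ _]
        · simp_rw [hDnsmul, hD, Function.iterate_succ_apply',
            smul_add, sum_add_distrib]
      _ = (∑ k ∈ range n.succ,
                n.choose k.succ • ((D i)^[n - k] p * (D i)^[k + 1] q)) +
              1 • ((D i)^[n + 1] p * (D i)^[0] q) +
            ∑ k ∈ range n.succ, n.choose k • ((D i)^[n - k] p * (D i)^[k + 1] q) :=
        ?_
      _ = ((∑ k ∈ range n.succ, n.choose k • ((D i)^[n - k] p * (D i)^[k + 1] q)) +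
              ∑ k ∈ range n.succ,
                n.choose k.succ • ((D i)^[n - k] p * (D i)^[k + 1] q)) +
            1 • ((D i)^[n + 1] p * (D i)^[0] q) := by
        rw [add_comm, add_assoc]
      _ = (∑ j ∈ range n.succ,
              (n + 1).choose (j + 1) • ((D i)^[n + 1 - (j + 1)] p * (D i)^[j + 1] q)) +
            1 • ((D i)^[n + 1] p * (D i)^[0] q) := by
        simp_rw [Nat.choose_succ_succ, Nat.succ_sub_succ, add_smul, sum_add_distrib]
      _ = ∑ k ∈ range n.succ.succ,
            n.succ.choose k • ((D i)^[n.succ - k] p * (D i)^[k] q) := by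
        rw [sum_range_succ' _ n.succ, Nat.choose_zero_right, tsub_zero]
    congr
    refine (sum_range_succ' _ _).trans (congr_arg₂ (· + ·) ?_ ?_)
    · rw [sum_range_succ, Nat.choose_succ_self, zero_smul, add_zero]
      refine sum_congr rfl fun k hk => ?_
      rw [mem_range] at hk
      congr
      omega
    · rw [Nat.choose_zero_right, tsub_zero]

lemma deg_D (i : Fin 3) (p : MvPolynomial (Fin 3) ℝ) (d : ℕ)
    (hd : p.totalDegree ≤ d + 1) : (D i p).totalDegree ≤ d := by
  conv_lhs => rw [p.as_sum]
  rw [show D i (∑ v ∈ p.support, monomial v (coeff v p)) =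
      ∑ v ∈ p.support, D i (monomial v (coeff v p)) from map_sum _ _ _]
  refine totalDegree_finsetSum_le fun v hv => ?_
  rw [show D i (monomial v (coeff v p)) =
      monomial (v - Finsupp.single i 1) (coeff v p * v i) from pderiv_monomial]
  rcases Nat.eq_zero_or_pos (v i) with h0 | h0
  · simp [h0]
  · refine (totalDegree_monomial_le _ _).trans ?_
    have hle : Finsupp.single i 1 ≤ v := by
      rw [Finsupp.single_le_iff]; exact h0
    have hsum : (v - Finsupp.single i 1).sum (fun _ e => e) + 1 = v.sum fun _ e => e := by
      conv_rhs => rw [← tsub_add_cancel_of_le hle]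
      rw [Finsupp.sum_add_index' (fun _ => rfl) (fun _ _ _ => rfl), Finsupp.sum_single_index rfl]
    have hv' : v.sum (fun _ e => e) ≤ d + 1 := le_trans (le_totalDegree hv) hd
    have hsum' : (v - Finsupp.single i 1).sum (fun _ => id) + 1 = v.sum fun _ e => e := hsum
    omega

lemma deg_iterD (i : Fin 3) (n : ℕ) (p : MvPolynomial (Fin 3) ℝ) (d : ℕ)
    (hd : p.totalDegree ≤ d + n) : ((D i)^[n] p).totalDegree ≤ d := by
  induction n generalizing d p with
  | zero => simpa using hd
  | succ n ih =>
    rw [Function.iterate_succ_apply]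
    exact ih _ _ (deg_D i p (d + n) (by omega))

lemma iterD_vanish (i : Fin 3) (n : ℕ) (p : MvPolynomial (Fin 3) ℝ)
    (h : p.totalDegree < n) : (D i)^[n] p = 0 := by
  rcases n with _ | n
  · omega
  · rw [Function.iterate_succ_apply']
    have hdeg : ((D i)^[n] p).totalDegree = 0 :=
      Nat.le_zero.mp (deg_iterD i n p 0 (by omega))
    refine pderiv_eq_zero_of_notMem_vars fun hiv => ?_
    obtain ⟨m, hm, him⟩ := (mem_vars i).mp hiv
    have := (totalDegree_eq_zero_iff _ _).mp hdeg m hm i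
    exact absurd this (Finsupp.mem_support_iff.mp him)

/-- The Heisenberg star product `f ⋆ h = ∑_n (λ^n/n!) yⁿ (∂_xⁿ f)(∂_zⁿ h)` on
polynomials in `x = X 0`, `y = X 1`, `z = X 2` (the sum is finite: terms with
`n > totalDegree f` vanish). -/
noncomputable def hstar (lam : ℝ) (f h : MvPolynomial (Fin 3) ℝ) :
    MvPolynomial (Fin 3) ℝ :=
  ∑ n ∈ Finset.range (f.totalDegree + 1),
    (lam ^ n / (n.factorial : ℝ)) •
      ((X 1 : MvPolynomial (Fin 3) ℝ) ^ n *
        ((fun p => pderiv 0 p)^[n] f) * ((fun p => pderiv 2 p)^[n] h))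

lemma hstar_def (lam : ℝ) (f h : MvPolynomial (Fin 3) ℝ) :
    hstar lam f h = ∑ n ∈ Finset.range (f.totalDegree + 1),
      (lam ^ n / (n.factorial : ℝ)) •
        ((X 1 : MvPolynomial (Fin 3) ℝ) ^ n * (D 0)^[n] f * (D 2)^[n] h) := rfl

lemma hstar_eq (lam : ℝ) (f h : MvPolynomial (Fin 3) ℝ) (N : ℕ)
    (hN : f.totalDegree < N) :
    hstar lam f h = ∑ n ∈ Finset.range N,
      (lam ^ n / (n.factorial : ℝ)) •
        ((X 1 : MvPolynomial (Fin 3) ℝ) ^ n * (D 0)^[n] f * (D 2)^[n] h) := by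
  rw [hstar_def]
  refine Finset.sum_subset (Finset.range_subset_range.mpr (by omega)) fun n _ hn => ?_
  rw [Finset.mem_range, not_lt] at hn
  rw [iterD_vanish 0 n f (by omega), mul_zero, zero_mul, smul_zero]

lemma deg_hstar (lam : ℝ) (f g : MvPolynomial (Fin 3) ℝ) :
    (hstar lam f g).totalDegree ≤ f.totalDegree + g.totalDegree := by
  rw [hstar_def]
  refine totalDegree_finsetSum_le fun n hn => ?_
  rw [Finset.mem_range] at hn
  refine (totalDegree_smul_le _ _).trans ?_
  refine (totalDegree_mul _ _).trans ?_
  have h1 : ((X 1 : MvPolynomial (Fin 3) ℝ) ^ n * (D 0)^[n] f).totalDegree ≤ f.totalDegree := by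
    refine (totalDegree_mul _ _).trans ?_
    have := deg_iterD 0 n f (f.totalDegree - n) (by omega)
    rw [totalDegree_X_pow]
    omega
  have h2 : ((D 2)^[n] g).totalDegree ≤ g.totalDegree :=
    deg_iterD 2 n g g.totalDegree (by omega)
  omega

lemma sum_tri {A : Type*} [AddCommMonoid A] (M : ℕ) (G : ℕ → ℕ → A)
    (hG : ∀ a c, M ≤ a + c → G a c = 0) :
    ∑ m ∈ Finset.range M, ∑ k ∈ Finset.range (m + 1), G k (m - k)
      = ∑ a ∈ Finset.range M, ∑ c ∈ Finset.range M, G a c := by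
  have step1 : ∀ a ∈ Finset.range M,
      ∑ c ∈ Finset.range M, G a c = ∑ c ∈ Finset.range (M - a), G a c := by
    intro a ha
    rw [Finset.mem_range] at ha
    refine (Finset.sum_subset (Finset.range_subset_range.mpr (by omega)) fun c _ hc => ?_).symm
    rw [Finset.mem_range, not_lt] at hc
    exact hG a c (by omega)
  rw [Finset.sum_congr rfl step1]
  rw [Finset.sum_sigma', Finset.sum_sigma']
  refine Finset.sum_nbij' (fun x => ⟨x.2, x.1 - x.2⟩) (fun x => ⟨x.1 + x.2, x.1⟩)
    ?_ ?_ ?_ ?_ ?_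
  · rintro ⟨m, k⟩ hmk
    simp only [Finset.mem_sigma, Finset.mem_range] at hmk ⊢
    omega
  · rintro ⟨a, c⟩ hac
    simp only [Finset.mem_sigma, Finset.mem_range] at hac ⊢
    omega
  · rintro ⟨m, k⟩ hmk
    simp only [Finset.mem_sigma, Finset.mem_range] at hmk
    show (⟨k + (m - k), k⟩ : Σ _ : ℕ, ℕ) = ⟨m, k⟩
    rw [show k + (m - k) = m from by omega]
  · rintro ⟨a, c⟩ hac
    show (⟨a, a + c - a⟩ : Σ _ : ℕ, ℕ) = ⟨a, c⟩
    rw [show a + c - a = c from by omega]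
  · rintro ⟨m, k⟩ _
    rfl

noncomputable def T (lam : ℝ) (f g h : MvPolynomial (Fin 3) ℝ) (a b c : ℕ) :
    MvPolynomial (Fin 3) ℝ :=
  (lam ^ (a + b + c) / ((a.factorial : ℝ) * b.factorial * c.factorial)) •
    ((X 1 : MvPolynomial (Fin 3) ℝ) ^ (a + b + c) *
      ((D 0)^[a + b] f * ((D 0)^[c] ((D 2)^[b] g) * (D 2)^[a + c] h)))

lemma T_vanish_h (lam : ℝ) (f g h : MvPolynomial (Fin 3) ℝ) (a b c : ℕ)
    (hv : h.totalDegree < a + c) : T lam f g h a b c = 0 := by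
  simp [T, iterD_vanish 2 (a + c) h hv]

lemma T_vanish_f (lam : ℝ) (f g h : MvPolynomial (Fin 3) ℝ) (a b c : ℕ)
    (hv : f.totalDegree < a + b) : T lam f g h a b c = 0 := by
  simp [T, iterD_vanish 0 (a + b) f hv]

lemma coefflem (lam : ℝ) {m n k : ℕ} (hk : k ≤ m) :
    lam ^ m / m.factorial * (lam ^ n / n.factorial) * (m.choose k : ℝ)
      = lam ^ (m - k + n + k) / (((m - k).factorial : ℝ) * n.factorial * k.factorial) := by
  rw [show m - k + n + k = m + n from by omega, pow_add]
  have hc : ((m.choose k : ℝ)) * k.factorial * (m - k).factorial = m.factorial := by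
    exact_mod_cast congrArg (Nat.cast : ℕ → ℝ) (Nat.choose_mul_factorial_mul_factorial hk)
  have h1 : (m.factorial : ℝ) ≠ 0 := Nat.cast_ne_zero.mpr (Nat.factorial_ne_zero m)
  have h2 : (n.factorial : ℝ) ≠ 0 := Nat.cast_ne_zero.mpr (Nat.factorial_ne_zero n)
  have h3 : ((m - k).factorial : ℝ) ≠ 0 := Nat.cast_ne_zero.mpr (Nat.factorial_ne_zero (m - k))
  have h4 : (k.factorial : ℝ) ≠ 0 := Nat.cast_ne_zero.mpr (Nat.factorial_ne_zero k)
  field_simp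
  linear_combination (lam ^ m * lam ^ n) * hc

lemma lhs_eq (lam : ℝ) (f g h : MvPolynomial (Fin 3) ℝ) (M : ℕ)
    (hf : f.totalDegree < M) (hfg : f.totalDegree + g.totalDegree < M) :
    hstar lam (hstar lam f g) h
      = ∑ m ∈ Finset.range M, ∑ n ∈ Finset.range M, ∑ k ∈ Finset.range (m + 1),
          T lam f g h (m - k) n k := by
  rw [hstar_eq lam (hstar lam f g) h M (by have := deg_hstar lam f g; omega)]
  refine Finset.sum_congr rfl fun m hm => ?_
  rw [hstar_eq lam f g M hf, iterD_sum]
  simp_rw [iterD_smul]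
  simp_rw [mul_assoc]
  simp_rw [iterD_Y 0 (show (0:Fin 3) ≠ 1 by decide) m]
  simp_rw [iterD_leibniz]
  simp_rw [← Nat.cast_smul_eq_nsmul ℝ]
  simp only [Finset.sum_mul, Finset.mul_sum, Finset.smul_sum, smul_mul_assoc, mul_smul_comm,
    smul_smul]
  refine Finset.sum_congr rfl fun n hn => ?_
  refine Finset.sum_congr rfl fun k hk => ?_
  rw [Finset.mem_range] at hk
  have hk' : k ≤ m := by omega
  rw [T, show m - k + n + k = m + n from by omega,
    Function.iterate_add_apply (D 0) (m - k) n f,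
    show m - k + k = m from by omega]
  congr 1
  · rw [← mul_assoc, coefflem lam hk', show m - k + n + k = m + n from by omega]
  · ring

lemma rhs_eq (lam : ℝ) (f g h : MvPolynomial (Fin 3) ℝ) (M : ℕ)
    (hf : f.totalDegree < M) (hg : g.totalDegree < M) :
    hstar lam f (hstar lam g h)
      = ∑ m ∈ Finset.range M, ∑ n ∈ Finset.range M, ∑ j ∈ Finset.range (m + 1),
          T lam f g h j (m - j) n := by
  rw [hstar_eq lam f (hstar lam g h) M hf]
  refine Finset.sum_congr rfl fun m hm => ?_
  rw [hstar_eq lam g h M hg, iterD_sum]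
  simp_rw [iterD_smul]
  simp_rw [mul_assoc]
  simp_rw [iterD_Y 2 (show (2:Fin 3) ≠ 1 by decide)]
  simp_rw [iterD_leibniz]
  simp_rw [← Nat.cast_smul_eq_nsmul ℝ]
  simp only [Finset.sum_mul, Finset.mul_sum, Finset.smul_sum, smul_mul_assoc, mul_smul_comm,
    smul_smul]
  refine Finset.sum_congr rfl fun n hn => ?_
  refine Finset.sum_congr rfl fun j hj => ?_
  rw [Finset.mem_range] at hj
  have hj' : j ≤ m := by omega
  rw [T, show j + (m - j) + n = m + n from by omega,
    show j + (m - j) = m from by omega,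
    Function.iterate_add_apply (D 2) j n h,
    iterD_comm 0 2 n (m - j) g]
  congr 1
  · rw [← mul_assoc, coefflem lam hj', show m - j + n + j = m + n from by omega]
    ring
  · ring

/-- The Heisenberg star product is associative. -/
theorem stmt_9 (lam : ℝ) (f g h : MvPolynomial (Fin 3) ℝ) :
    hstar lam (hstar lam f g) h = hstar lam f (hstar lam g h) := by
  set M := f.totalDegree + g.totalDegree + h.totalDegree + 1 with hM
  rw [lhs_eq lam f g h M (by omega) (by omega), rhs_eq lam f g h M (by omega) (by omega)]
  rw [Finset.sum_comm]
  conv_rhs => rw [Finset.sum_comm]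
  have hl : ∀ n, ∑ m ∈ Finset.range M, ∑ k ∈ Finset.range (m + 1), T lam f g h (m - k) n k
      = ∑ a ∈ Finset.range M, ∑ c ∈ Finset.range M, T lam f g h c n a := by
    intro n
    exact sum_tri M (fun a c => T lam f g h c n a)
      (fun a c hac => T_vanish_h lam f g h c n a (by omega))
  have hr : ∀ n, ∑ m ∈ Finset.range M, ∑ j ∈ Finset.range (m + 1), T lam f g h j (m - j) n
      = ∑ a ∈ Finset.range M, ∑ c ∈ Finset.range M, T lam f g h a c n := by
    intro n
    exact sum_tri M (fun a c => T lam f g h a c n)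
      (fun a c hac => T_vanish_f lam f g h a c n (by omega))
  rw [Finset.sum_congr rfl fun n _ => hl n, Finset.sum_congr rfl fun n _ => hr n]
  calc ∑ n ∈ Finset.range M, ∑ a ∈ Finset.range M, ∑ c ∈ Finset.range M, T lam f g h c n a
      = ∑ n ∈ Finset.range M, ∑ c ∈ Finset.range M, ∑ a ∈ Finset.range M, T lam f g h c n a :=
        Finset.sum_congr rfl fun n _ => Finset.sum_comm
    _ = ∑ c ∈ Finset.range M, ∑ n ∈ Finset.range M, ∑ a ∈ Finset.range M, T lam f g h c n a :=
        Finset.sum_comm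
    _ = ∑ a ∈ Finset.range M, ∑ c ∈ Finset.range M, ∑ n ∈ Finset.range M, T lam f g h a c n := rfl
    _ = ∑ a ∈ Finset.range M, ∑ n ∈ Finset.range M, ∑ c ∈ Finset.range M, T lam f g h a c n :=
        Finset.sum_congr rfl fun a _ => Finset.sum_comm
    _ = ∑ n ∈ Finset.range M, ∑ a ∈ Finset.range M, ∑ c ∈ Finset.range M, T lam f g h a c n :=
        Finset.sum_comm
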